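/- Let $Q$ be a symmetric positive definite $d \times d$ matrix, $x, \xi \in \mathbb{R}^d$, and let $u$ be a random vector with $\mathbb{E}[uu^\top] = I_d$. Let $z \ge 0$ be drawn (independently of $u$) from a density $f$ on $[0,\infty)$ that is positive wherever needed. Define $h(y) = \frac{1}{2}(y - \xi)^\top Q (y - \xi)$ and the estimator: if $h(x + zu) < h(x - zu)$ set $g = -\frac{1}{2}\frac{u^\top Q u}{f(z)} u$ when $h(x+zu) \le h(x)$ and $g = 0$ otherwise; if $h(x+zu) \ge h(x-zu)$ set $g = \frac{1}{2}\frac{u^\top Q u}{f(z)} u$ when $h(x-zu) \le h(x)$ and $g = 0$ otherwise. Then $\mathbb{E}_{z,u}[g] = Q(x - \xi) = \nabla h(x)$. -/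

import Mathlib

open MeasureTheory Matrix Set

/-- Unbiasedness of the quadratic comparison-based gradient estimator (CBA-QP):
for `h(y) = ½ (y-ξ)ᵀ Q (y-ξ)` with `Q` symmetric positive definite, a random direction
`u` with `E[uuᵀ] = I_d`, and `z ≥ 0` drawn independently from a density `f` on `[0,∞)`,
the estimator `g` (defined via the two comparisons in Algorithm CBA-QP) satisfies
`E_{z,u}[g] = Q(x - ξ) = ∇h(x)`. -/
theorem cbaqp_unbiased
    {d : ℕ} {Ω : Type*} [MeasurableSpace Ω] (ν : Measure Ω) [IsProbabilityMeasure ν]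
    (U : Ω → (Fin d → ℝ))
    (Q : Matrix (Fin d) (Fin d) ℝ) (hQsym : Q.IsSymm) (hQpos : Q.PosDef)
    (x ξ : Fin d → ℝ)
    (f : ℝ → ℝ) (hfmeas : Measurable f) (hfpos : ∀ z, 0 ≤ z → 0 < f z)
    (hfone : (∫ z in Ici (0:ℝ), f z) = 1)
    (hUmom : ∀ i j, (∫ ω, U ω i * U ω j ∂ν) = if i = j then 1 else 0)
    (hUint : ∀ i j, Integrable (fun ω => U ω i * U ω j) ν)
    (h : (Fin d → ℝ) → ℝ)
    (hdef : ∀ y, h y = 1 / 2 * ((y - ξ) ⬝ᵥ Q.mulVec (y - ξ)))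
    (g : (Fin d → ℝ) → ℝ → (Fin d → ℝ))
    (hg : ∀ u z, g u z =
      if h (x + z • u) < h (x - z • u) then
        (if h (x + z • u) ≤ h x then (-(1 / 2) * (u ⬝ᵥ Q.mulVec u) / f z) • u else 0)
      else
        (if h (x - z • u) ≤ h x then (1 / 2 * (u ⬝ᵥ Q.mulVec u) / f z) • u else 0)) :
    ∀ i, (∫ ω, (∫ z in Ici (0:ℝ), g (U ω) z i * f z) ∂ν) = Q.mulVec (x - ξ) i := by
  intro i
  -- symmetry of the bilinear form
  have hsymm : ∀ v w : Fin d → ℝ, v ⬝ᵥ Q.mulVec w = w ⬝ᵥ Q.mulVec v := by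
    intro v w
    calc v ⬝ᵥ Q *ᵥ w = (v ᵥ* Q) ⬝ᵥ w := dotProduct_mulVec _ _ _
      _ = (v ᵥ* Qᵀ) ⬝ᵥ w := by rw [hQsym]
      _ = (Q *ᵥ v) ⬝ᵥ w := by rw [vecMul_transpose]
      _ = w ⬝ᵥ Q *ᵥ v := dotProduct_comm _ _
  -- quadratic expansion of h along a ray
  have hneg : ∀ (u : Fin d → ℝ) (s : ℝ), x - s • u = x + (-s) • u := by
    intro u s; funext j; simp [Pi.sub_apply, Pi.add_apply, Pi.smul_apply, smul_eq_mul]; ring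
  have hexp : ∀ (u : Fin d → ℝ) (s : ℝ),
      h (x + s • u) = h x + s * (u ⬝ᵥ Q.mulVec (x - ξ)) + s ^ 2 / 2 * (u ⬝ᵥ Q.mulVec u) := by
    intro u s
    have hv : x + s • u - ξ = (x - ξ) + s • u := by
      funext j; simp [Pi.sub_apply, Pi.add_apply, Pi.smul_apply, smul_eq_mul]; ring
    rw [hdef, hdef, hv]
    simp only [mulVec_add, mulVec_smul, dotProduct_add, add_dotProduct, dotProduct_smul,
      smul_dotProduct, smul_eq_mul]
    rw [hsymm (x - ξ) u]
    ring
  -- the key inner integral computation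
  have key : ∀ u : Fin d → ℝ,
      (∫ z in Ici (0:ℝ), g u z i * f z) = (u ⬝ᵥ Q.mulVec (x - ξ)) * u i := by
    intro u
    by_cases hu : u = 0
    · subst hu
      have hz0 : ∀ z : ℝ, g 0 z i * f z = 0 := by
        intro z
        rw [hg]
        simp
      simp_rw [hz0]
      simp
    · set a := u ⬝ᵥ Q.mulVec (x - ξ) with ha
      set b := u ⬝ᵥ Q.mulVec u with hb
      have hbpos : 0 < b := by
        have := hQpos.dotProduct_mulVec_pos hu
        simpa using this
      have hbne : b ≠ 0 := hbpos.ne'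
      have hae : ∀ᵐ z ∂(volume.restrict (Ici (0:ℝ))), 0 < z := by
        have h1 : ∀ᵐ z ∂(volume.restrict (Ici (0:ℝ))), z ∈ Ici (0:ℝ) :=
          ae_restrict_mem measurableSet_Ici
        have h2 : ∀ᵐ z : ℝ ∂volume, z ≠ 0 := by
          refine ae_iff.mpr ?_
          simp only [not_ne_iff]
          simpa using Real.volume_singleton (a := (0:ℝ))
        have h2' := ae_restrict_of_ae (s := Ici (0:ℝ)) h2
        filter_upwards [h1, h2'] with z hz hz'
        exact lt_of_le_of_ne hz (Ne.symm hz')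
      rcases lt_or_ge a 0 with haneg | hapos
      · -- case a < 0
        set c := -2 * a / b with hc
        have hcb : c * b = -2 * a := by rw [hc]; field_simp
        have hcpos : 0 < c := by
          rw [hc]; exact div_pos (by linarith) hbpos
        have heq : (fun z => g u z i * f z) =ᵐ[volume.restrict (Ici (0:ℝ))]
            (Ioc (0:ℝ) c).indicator (fun _ => -(b / 2) * u i) := by
          filter_upwards [hae] with z hz
          have hfz : 0 < f z := hfpos z hz.le
          rw [hg, hneg u z, hexp u z, hexp u (-z)]
          have hcond1 : h x + z * a + z ^ 2 / 2 * b <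
              h x + (-z) * a + (-z) ^ 2 / 2 * b := by nlinarith
          rw [if_pos hcond1]
          by_cases hzc : z ≤ c
          · have hcond2 : h x + z * a + z ^ 2 / 2 * b ≤ h x := by
              have h1 : z * b ≤ c * b := mul_le_mul_of_nonneg_right hzc hbpos.le
              rw [hcb] at h1
              nlinarith [mul_pos hz hbpos]
            rw [if_pos hcond2, indicator_of_mem (mem_Ioc.mpr ⟨hz, hzc⟩)]
            simp only [Pi.smul_apply, smul_eq_mul]
            field_simp
            ring
          · have hcond2 : ¬ (h x + z * a + z ^ 2 / 2 * b ≤ h x) := by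
              push_neg
              push_neg at hzc
              nlinarith
            rw [if_neg hcond2, indicator_of_notMem (by
              simp only [mem_Ioc, not_and]
              exact fun _ h2 => absurd h2 hzc)]
            simp [Pi.zero_apply]
        rw [integral_congr_ae heq, setIntegral_indicator measurableSet_Ioc,
          show Ici (0:ℝ) ∩ Ioc 0 c = Ioc 0 c from
            inter_eq_self_of_subset_right (fun z hz => le_of_lt hz.1),
          setIntegral_const, Real.volume_real_Ioc, smul_eq_mul,
          max_eq_left (by linarith), hc]
        field_simp
        ring
      · -- case 0 ≤ a
        set c := 2 * a / b with hc
        have hcb : c * b = 2 * a := by rw [hc]; field_simp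
        have hcnn : 0 ≤ c := by
          rw [hc]; exact div_nonneg (by linarith) hbpos.le
        have heq : (fun z => g u z i * f z) =ᵐ[volume.restrict (Ici (0:ℝ))]
            (Ioc (0:ℝ) c).indicator (fun _ => (b / 2) * u i) := by
          filter_upwards [hae] with z hz
          have hfz : 0 < f z := hfpos z hz.le
          rw [hg, hneg u z, hexp u z, hexp u (-z)]
          have hcond1 : ¬ (h x + z * a + z ^ 2 / 2 * b <
              h x + (-z) * a + (-z) ^ 2 / 2 * b) := by
            push_neg
            nlinarith
          rw [if_neg hcond1]
          by_cases hzc : z ≤ c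
          · have hcond2 : h x + (-z) * a + (-z) ^ 2 / 2 * b ≤ h x := by
              have h1 : z * b ≤ c * b := mul_le_mul_of_nonneg_right hzc hbpos.le
              rw [hcb] at h1
              nlinarith [mul_pos hz hbpos]
            rw [if_pos hcond2, indicator_of_mem (mem_Ioc.mpr ⟨hz, hzc⟩)]
            simp only [Pi.smul_apply, smul_eq_mul]
            field_simp
            ring
          · have hcond2 : ¬ (h x + (-z) * a + (-z) ^ 2 / 2 * b ≤ h x) := by
              push_neg
              push_neg at hzc
              have h1 : c * b < z * b := mul_lt_mul_of_pos_right hzc hbpos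
              rw [hcb] at h1
              nlinarith [mul_pos hz (sub_pos.mpr h1)]
            rw [if_neg hcond2, indicator_of_notMem (by
              simp only [mem_Ioc, not_and]
              exact fun _ h2 => absurd h2 hzc)]
            simp [Pi.zero_apply]
        rw [integral_congr_ae heq, setIntegral_indicator measurableSet_Ioc,
          show Ici (0:ℝ) ∩ Ioc 0 c = Ioc 0 c from
            inter_eq_self_of_subset_right (fun z hz => le_of_lt hz.1),
          setIntegral_const, Real.volume_real_Ioc, smul_eq_mul,
          max_eq_left (by linarith), hc]
        field_simp
        ring
  -- outer integral
  have step1 : (∫ ω, (∫ z in Ici (0:ℝ), g (U ω) z i * f z) ∂ν)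
      = ∫ ω, (U ω ⬝ᵥ Q.mulVec (x - ξ)) * U ω i ∂ν :=
    integral_congr_ae (Filter.Eventually.of_forall fun ω => key (U ω))
  have step2 : (∫ ω, (U ω ⬝ᵥ Q.mulVec (x - ξ)) * U ω i ∂ν)
      = ∫ ω, ∑ j, Q.mulVec (x - ξ) j * (U ω j * U ω i) ∂ν := by
    refine integral_congr_ae (Filter.Eventually.of_forall fun ω => ?_)
    simp only [dotProduct, Finset.sum_mul]
    exact Finset.sum_congr rfl fun j _ => by ring
  rw [step1, step2,
    integral_finset_sum _ (fun j _ => (hUint j i).const_mul (Q.mulVec (x - ξ) j))]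
  simp_rw [integral_const_mul, hUmom]
  simp
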